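/- Let u : Ω → ℝ be 1-Lipschitz and let [x,y] be a transport ray of u. Then for every z in the interior ]x,y[ of the ray, u is differentiable at z, i.e. there is a vector ∇u(z) ∈ ℝ^d with u(w) = u(z) + ⟨∇u(z), w − z⟩ + o(|w − z|) as w → z in Ω, and ∇u(z) = (x − y)/|x − y|. -/

import Mathlib

open MeasureTheory Set

noncomputable section

/-- `[x, y]` is a transport ray of `u`: a maximal segment on which the Lipschitz
inequality of `u` is saturated, with upper endpoint `x` and lower endpoint `y`. -/
def IsTransportRay {d : ℕ} (Ω : Set (EuclideanSpace ℝ (Fin d)))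
    (u : EuclideanSpace ℝ (Fin d) → ℝ) (x y : EuclideanSpace ℝ (Fin d)) : Prop :=
  x ∈ Ω ∧ y ∈ Ω ∧ x ≠ y ∧ u x - u y = ‖x - y‖ ∧
  ∀ z w : EuclideanSpace ℝ (Fin d), z ∈ Ω → w ∈ Ω → z ≠ w → u z - u w = ‖z - w‖ →
    segment ℝ x y ⊆ segment ℝ z w → segment ℝ x y = segment ℝ z w

open InnerProductSpace RealInnerProductSpace Asymptotics Filter

lemma aux_norm_add {E : Type*} [NormedAddCommGroup E] [InnerProductSpace ℝ E] (a h : E) :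
    2 * ‖a‖ * ‖a + h‖ ≤ 2 * ‖a‖ ^ 2 + 2 * ⟪a, h⟫_ℝ + ‖h‖ ^ 2 := by
  nlinarith [norm_add_sq_real a h, sq_nonneg (‖a + h‖ - ‖a‖)]

set_option maxHeartbeats 1000000 in
theorem stmt2 {d : ℕ} (hd : 1 ≤ d) (Ω : Set (EuclideanSpace ℝ (Fin d)))
    (hΩc : IsCompact Ω) (hΩv : Convex ℝ Ω)
    (u : EuclideanSpace ℝ (Fin d) → ℝ) (hu : LipschitzOnWith 1 u Ω)
    (x y : EuclideanSpace ℝ (Fin d)) (hray : IsTransportRay Ω u x y) :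
    ∀ z ∈ openSegment ℝ x y, HasGradientWithinAt u (‖x - y‖⁻¹ • (x - y)) Ω z := by
  obtain ⟨hx, hy, hxy, hsat, -⟩ := hray
  intro z hz
  have hzΩ : z ∈ Ω :=
    hΩv.segment_subset hx hy (openSegment_subset_segment ℝ x y hz)
  obtain ⟨a, b, ha, hb, hab, hz'⟩ := hz
  have hL : 0 < ‖x - y‖ := by
    rw [norm_pos_iff]; exact sub_ne_zero.mpr hxy
  have hxz : x - z = b • (x - y) := by
    rw [← hz']; match_scalars <;> linarith
  have hzy : z - y = a • (x - y) := by
    rw [← hz']; match_scalars <;> linarith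
  have lip : ∀ p ∈ Ω, ∀ q ∈ Ω, u p - u q ≤ ‖p - q‖ := by
    intro p hp q hq
    have := hu.dist_le_mul p hp q hq
    rw [Real.dist_eq, dist_eq_norm] at this
    calc u p - u q ≤ |u p - u q| := le_abs_self _
    _ ≤ ‖p - q‖ := by simpa using this
  have hnxz : ‖x - z‖ = b * ‖x - y‖ := by
    rw [hxz, norm_smul, Real.norm_of_nonneg hb.le]
  have hnzy : ‖z - y‖ = a * ‖x - y‖ := by
    rw [hzy, norm_smul, Real.norm_of_nonneg ha.le]
  have hsum : ‖x - z‖ + ‖z - y‖ = ‖x - y‖ := by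
    rw [hnxz, hnzy]; nlinarith
  have e1 : u x - u z = ‖x - z‖ := by
    have s1 := lip x hx z hzΩ
    have s2 := lip z hzΩ y hy
    linarith
  have e2 : u z - u y = ‖z - y‖ := by
    have s1 := lip x hx z hzΩ
    have s2 := lip z hzΩ y hy
    linarith
  have hmpos : 0 < min a b := lt_min ha hb
  set C : ℝ := (2 * min a b * ‖x - y‖)⁻¹ with hC
  have hCpos : 0 < C := by positivity
  have key : ∀ w ∈ Ω, |u w - u z - ⟪‖x - y‖⁻¹ • (x - y), w - z⟫_ℝ| ≤ C * ‖w - z‖ ^ 2 := by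
    intro w hw
    have hgh : ⟪‖x - y‖⁻¹ • (x - y), w - z⟫_ℝ = ⟪x - y, w - z⟫_ℝ / ‖x - y‖ := by
      rw [real_inner_smul_left, inv_mul_eq_div]
    -- lower bound
    have lb : ⟪x - y, w - z⟫_ℝ / ‖x - y‖ - (2 * b * ‖x - y‖)⁻¹ * ‖w - z‖ ^ 2
        ≤ u w - u z := by
      have hxw : x - w = b • (x - y) + -(w - z) := by rw [← hxz]; abel
      have aux := aux_norm_add (b • (x - y)) (-(w - z))
      rw [← hxw, norm_smul, Real.norm_of_nonneg hb.le, inner_neg_right, real_inner_smul_left,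
        norm_neg] at aux
      have hub : ‖x - w‖ ≤ b * ‖x - y‖ - ⟪x - y, w - z⟫_ℝ / ‖x - y‖
          + ‖w - z‖ ^ 2 / (2 * b * ‖x - y‖) := by
        rw [← mul_le_mul_iff_right₀ (show (0:ℝ) < 2 * b * ‖x - y‖ by positivity)]
        have expand : 2 * b * ‖x - y‖ * (b * ‖x - y‖ - ⟪x - y, w - z⟫_ℝ / ‖x - y‖
            + ‖w - z‖ ^ 2 / (2 * b * ‖x - y‖))
            = 2 * (b * ‖x - y‖) ^ 2 + 2 * -(b * ⟪x - y, w - z⟫_ℝ) + ‖w - z‖ ^ 2 := by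
          field_simp; ring
        rw [expand]
        calc 2 * b * ‖x - y‖ * ‖x - w‖ = 2 * (b * ‖x - y‖) * ‖x - w‖ := by ring
        _ ≤ _ := aux
      have l1 := lip x hx w hw
      rw [inv_mul_eq_div]
      have hbz : u x - u z = b * ‖x - y‖ := by rw [e1, hnxz]
      linarith
    -- upper bound
    have ub : u w - u z ≤ ⟪x - y, w - z⟫_ℝ / ‖x - y‖
        + (2 * a * ‖x - y‖)⁻¹ * ‖w - z‖ ^ 2 := by
      have hwy : w - y = a • (x - y) + (w - z) := by rw [← hzy]; abel
      have aux := aux_norm_add (a • (x - y)) (w - z)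
      rw [← hwy, norm_smul, Real.norm_of_nonneg ha.le, real_inner_smul_left] at aux
      have hub : ‖w - y‖ ≤ a * ‖x - y‖ + ⟪x - y, w - z⟫_ℝ / ‖x - y‖
          + ‖w - z‖ ^ 2 / (2 * a * ‖x - y‖) := by
        rw [← mul_le_mul_iff_right₀ (show (0:ℝ) < 2 * a * ‖x - y‖ by positivity)]
        have expand : 2 * a * ‖x - y‖ * (a * ‖x - y‖ + ⟪x - y, w - z⟫_ℝ / ‖x - y‖
            + ‖w - z‖ ^ 2 / (2 * a * ‖x - y‖))
            = 2 * (a * ‖x - y‖) ^ 2 + 2 * (a * ⟪x - y, w - z⟫_ℝ) + ‖w - z‖ ^ 2 := by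
          field_simp
        rw [expand]
        calc 2 * a * ‖x - y‖ * ‖w - y‖ = 2 * (a * ‖x - y‖) * ‖w - y‖ := by ring
        _ ≤ _ := aux
      have l1 := lip w hw y hy
      rw [inv_mul_eq_div]
      have haz : u z - u y = a * ‖x - y‖ := by rw [e2, hnzy]
      linarith
    have hCa : (2 * a * ‖x - y‖)⁻¹ ≤ C := by
      rw [hC]
      exact inv_anti₀ (by positivity) (by gcongr; exact min_le_left a b)
    have hCb : (2 * b * ‖x - y‖)⁻¹ ≤ C := by
      rw [hC]
      exact inv_anti₀ (by positivity) (by gcongr; exact min_le_right a b)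
    have hh2 : (0:ℝ) ≤ ‖w - z‖ ^ 2 := by positivity
    rw [abs_le, hgh]
    constructor
    · nlinarith [mul_le_mul_of_nonneg_right hCb hh2]
    · nlinarith [mul_le_mul_of_nonneg_right hCa hh2]
  -- conclude
  rw [hasGradientWithinAt_iff_isLittleO, Asymptotics.isLittleO_iff]
  intro ε hε
  have hδ : 0 < ε / C := by positivity
  filter_upwards [self_mem_nhdsWithin,
    mem_nhdsWithin_of_mem_nhds (Metric.ball_mem_nhds z hδ)] with w hwΩ hwb
  rw [Metric.mem_ball, dist_eq_norm] at hwb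
  have hk := key w hwΩ
  have hmain : C * ‖w - z‖ ^ 2 ≤ ε * ‖w - z‖ := by
    have h1 : C * ‖w - z‖ ≤ ε := by
      rw [← le_div_iff₀' hCpos]; exact hwb.le
    calc C * ‖w - z‖ ^ 2 = (C * ‖w - z‖) * ‖w - z‖ := by ring
    _ ≤ ε * ‖w - z‖ := mul_le_mul_of_nonneg_right h1 (norm_nonneg _)
  calc ‖u w - u z - ⟪‖x - y‖⁻¹ • (x - y), w - z⟫_ℝ‖
      = |u w - u z - ⟪‖x - y‖⁻¹ • (x - y), w - z⟫_ℝ| := Real.norm_eq_abs _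
  _ ≤ C * ‖w - z‖ ^ 2 := hk
  _ ≤ ε * ‖w - z‖ := hmain
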